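/- Witt decomposition of a real vector: for every X ∈ ℝ⁸, 1 ⊗ ι(X) = (1/8)·Σ_{i=0}^{7} Z_i in 𝕆 ⊗ Cl₈; equivalently, 1 ⊗ ι(X) = (1/8)·Σ_{i=0}^{7} f_i·(J_i(Φ(X)) ⊗ 1). -/

import Mathlib

noncomputable section

open scoped Quaternion TensorProduct

/-- The octonions, realized as the Cayley–Dickson double of the quaternions. -/
def Oct : Type := ℍ × ℍ

namespace Oct

instance : AddCommGroup Oct := inferInstanceAs (AddCommGroup (ℍ × ℍ))
instance : Module ℝ Oct := inferInstanceAs (Module ℝ (ℍ × ℍ))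

/-- First (quaternionic) component. -/
def x (p : Oct) : ℍ := Prod.fst p
/-- Second (quaternionic) component. -/
def y (p : Oct) : ℍ := Prod.snd p
/-- Build an octonion from two quaternions. -/
def mk (a b : ℍ) : Oct := ((a, b) : ℍ × ℍ)

@[simp] lemma x_mk (a b : ℍ) : (mk a b).x = a := rfl
@[simp] lemma y_mk (a b : ℍ) : (mk a b).y = b := rfl
@[simp] lemma x_add (p q : Oct) : (p + q).x = p.x + q.x := rfl
@[simp] lemma y_add (p q : Oct) : (p + q).y = p.y + q.y := rfl
@[simp] lemma x_smul (r : ℝ) (p : Oct) : (r • p).x = r • p.x := rfl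
@[simp] lemma y_smul (r : ℝ) (p : Oct) : (r • p).y = r • p.y := rfl
@[simp] lemma x_zero : (0 : Oct).x = 0 := rfl
@[simp] lemma y_zero : (0 : Oct).y = 0 := rfl

@[ext] lemma ext {p q : Oct} (h1 : p.x = q.x) (h2 : p.y = q.y) : p = q :=
  Prod.ext h1 h2

/-- Cayley–Dickson multiplication: `(a,b)·(c,d) = (a·c − conj(d)·b, d·a + b·conj(c))`. -/
instance : Mul Oct :=
  ⟨fun p q => mk (p.x * q.x - star q.y * p.y) (q.y * p.x + p.y * star q.x)⟩

instance : One Oct := ⟨mk 1 0⟩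

@[simp] lemma x_mul (p q : Oct) : (p * q).x = p.x * q.x - star q.y * p.y := rfl
@[simp] lemma y_mul (p q : Oct) : (p * q).y = q.y * p.x + p.y * star q.x := rfl
@[simp] lemma x_one : (1 : Oct).x = 1 := rfl
@[simp] lemma y_one : (1 : Oct).y = 0 := rfl

instance : NonUnitalNonAssocRing Oct :=
  { (inferInstance : AddCommGroup Oct) with
    mul := (· * ·)
    left_distrib := by
      intro p q r
      refine ext ?_ ?_ <;>
        simp only [x_mul, y_mul, x_add, y_add, star_add] <;> noncomm_ring
    right_distrib := by
      intro p q r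
      refine ext ?_ ?_ <;>
        simp only [x_mul, y_mul, x_add, y_add, star_add] <;> noncomm_ring
    zero_mul := by
      intro p
      refine ext ?_ ?_ <;> simp only [x_mul, y_mul, x_zero, y_zero, star_zero] <;> simp
    mul_zero := by
      intro p
      refine ext ?_ ?_ <;> simp only [x_mul, y_mul, x_zero, y_zero, star_zero] <;> simp }

instance : SMulCommClass ℝ Oct Oct where
  smul_comm r p q := by
    show r • (p * q) = p * (r • q)
    refine ext ?_ ?_ <;>
      simp [x_mul, y_mul, smul_sub, smul_add, mul_smul_comm, smul_mul_assoc,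
        star_smul, star_trivial]

instance : IsScalarTower ℝ Oct Oct where
  smul_assoc r p q := by
    show (r • p) * q = r • (p * q)
    refine ext ?_ ?_ <;>
      simp [x_mul, y_mul, smul_sub, smul_add, mul_smul_comm, smul_mul_assoc,
        star_smul, star_trivial]

/-- Octonionic conjugation: `conj (a,b) = (conj a, −b)`. -/
def conj (p : Oct) : Oct := mk (star p.x) (-p.y)

/-- The real part of an octonion. -/
def re (p : Oct) : ℝ := p.x.re

/-- The standard basis `e_0, …, e_7` of the octonions. -/
def e : Fin 8 → Oct :=
  ![mk 1 0, mk ⟨0, 1, 0, 0⟩ 0, mk ⟨0, 0, 1, 0⟩ 0, mk ⟨0, 0, 0, 1⟩ 0,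
    mk 0 1, mk 0 ⟨0, 1, 0, 0⟩, mk 0 ⟨0, 0, 1, 0⟩, mk 0 ⟨0, 0, 0, 1⟩]

/-- The real coordinates of an octonion with respect to the standard basis. -/
def coord : Fin 8 → Oct → ℝ :=
  ![fun p => p.x.re, fun p => p.x.imI, fun p => p.x.imJ, fun p => p.x.imK,
    fun p => p.y.re, fun p => p.y.imI, fun p => p.y.imJ, fun p => p.y.imK]

lemma coord_add (j : Fin 8) (p q : Oct) :
    coord j (p + q) = coord j p + coord j q := by fin_cases j <;> rfl

lemma coord_smul (j : Fin 8) (r : ℝ) (p : Oct) :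
    coord j (r • p) = r * coord j p := by fin_cases j <;> rfl

/-- The binary "dot product" `⟨i,j⟩ = i₁j₁ + i₂j₂ + i₃j₃` of binary digits. -/
def bdot (i j : Fin 8) : ℕ :=
  ((i.val.testBit 0 && j.val.testBit 0).toNat +
   (i.val.testBit 1 && j.val.testBit 1).toNat +
   (i.val.testBit 2 && j.val.testBit 2).toNat) % 2

/-- The involution `J_i`, the ℝ-linear map determined by `J_i(e_j) = (−1)^{⟨i,j⟩} e_j`. -/
def J (i : Fin 8) : Oct →ₗ[ℝ] Oct where
  toFun p := ∑ j : Fin 8, ((-1 : ℝ) ^ bdot i j * coord j p) • e j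
  map_add' p q := by
    simp only [coord_add, mul_add, add_smul]
    rw [Finset.sum_add_distrib]
  map_smul' r p := by
    simp only [coord_smul, RingHom.id_apply, Finset.smul_sum, smul_smul, mul_left_comm]

/-- The sign `σ(j,i)` defined by `J_j(conj e_i) = (−1)^{σ(j,i)} e_i`. -/
def sigma (j i : Fin 8) : ℕ := if i = 0 then 0 else (bdot j i + 1) % 2

end Oct
namespace Oct

@[simp] lemma e_0 : e 0 = mk 1 0 := rfl
@[simp] lemma e_1 : e 1 = mk ⟨0, 1, 0, 0⟩ 0 := rfl
@[simp] lemma e_2 : e 2 = mk ⟨0, 0, 1, 0⟩ 0 := rfl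
@[simp] lemma e_3 : e 3 = mk ⟨0, 0, 0, 1⟩ 0 := rfl
@[simp] lemma e_4 : e 4 = mk 0 1 := rfl
@[simp] lemma e_5 : e 5 = mk 0 ⟨0, 1, 0, 0⟩ := rfl
@[simp] lemma e_6 : e 6 = mk 0 ⟨0, 0, 1, 0⟩ := rfl
@[simp] lemma e_7 : e 7 = mk 0 ⟨0, 0, 0, 1⟩ := rfl

@[simp] lemma coord_0 (p : Oct) : coord 0 p = p.x.re := rfl
@[simp] lemma coord_1 (p : Oct) : coord 1 p = p.x.imI := rfl
@[simp] lemma coord_2 (p : Oct) : coord 2 p = p.x.imJ := rfl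
@[simp] lemma coord_3 (p : Oct) : coord 3 p = p.x.imK := rfl
@[simp] lemma coord_4 (p : Oct) : coord 4 p = p.y.re := rfl
@[simp] lemma coord_5 (p : Oct) : coord 5 p = p.y.imI := rfl
@[simp] lemma coord_6 (p : Oct) : coord 6 p = p.y.imJ := rfl
@[simp] lemma coord_7 (p : Oct) : coord 7 p = p.y.imK := rfl

lemma coord_e (l m : Fin 8) : coord l (e m) = if l = m then 1 else 0 := by
  fin_cases l <;> fin_cases m <;> rfl

lemma sum_coord_smul_e (p : Oct) : ∑ l : Fin 8, coord l p • e l = p := by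
  refine ext ?_ ?_ <;> refine QuaternionAlgebra.ext ?_ ?_ ?_ ?_ <;> rw [Fin.sum_univ_eight]
  · show p.x.re * 1 + p.x.imI * 0 + p.x.imJ * 0 + p.x.imK * 0 + p.y.re * 0 + p.y.imI * 0 + p.y.imJ * 0 + p.y.imK * 0 = p.x.re
    ring
  · show p.x.re * 0 + p.x.imI * 1 + p.x.imJ * 0 + p.x.imK * 0 + p.y.re * 0 + p.y.imI * 0 + p.y.imJ * 0 + p.y.imK * 0 = p.x.imI
    ring
  · show p.x.re * 0 + p.x.imI * 0 + p.x.imJ * 1 + p.x.imK * 0 + p.y.re * 0 + p.y.imI * 0 + p.y.imJ * 0 + p.y.imK * 0 = p.x.imJ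
    ring
  · show p.x.re * 0 + p.x.imI * 0 + p.x.imJ * 0 + p.x.imK * 1 + p.y.re * 0 + p.y.imI * 0 + p.y.imJ * 0 + p.y.imK * 0 = p.x.imK
    ring
  · show p.x.re * 0 + p.x.imI * 0 + p.x.imJ * 0 + p.x.imK * 0 + p.y.re * 1 + p.y.imI * 0 + p.y.imJ * 0 + p.y.imK * 0 = p.y.re
    ring
  · show p.x.re * 0 + p.x.imI * 0 + p.x.imJ * 0 + p.x.imK * 0 + p.y.re * 0 + p.y.imI * 1 + p.y.imJ * 0 + p.y.imK * 0 = p.y.imI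
    ring
  · show p.x.re * 0 + p.x.imI * 0 + p.x.imJ * 0 + p.x.imK * 0 + p.y.re * 0 + p.y.imI * 0 + p.y.imJ * 1 + p.y.imK * 0 = p.y.imJ
    ring
  · show p.x.re * 0 + p.x.imI * 0 + p.x.imJ * 0 + p.x.imK * 0 + p.y.re * 0 + p.y.imI * 0 + p.y.imJ * 0 + p.y.imK * 1 = p.y.imK
    ring

end Oct

/-- The ℝ-linear isomorphism `Φ : ℝ⁸ → 𝕆` with `Φ(b_l) = e_l`. -/
def Phi : EuclideanSpace ℝ (Fin 8) ≃ₗ[ℝ] Oct where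
  toFun v := ∑ l : Fin 8, v l • Oct.e l
  map_add' u v := by
    simp only [PiLp.add_apply, add_smul]
    rw [Finset.sum_add_distrib]
  map_smul' r v := by
    simp only [PiLp.smul_apply, smul_eq_mul, RingHom.id_apply, Finset.smul_sum, smul_smul]
  invFun p := (WithLp.toLp 2 (fun l => Oct.coord l p) : EuclideanSpace ℝ (Fin 8))
  left_inv v := by
    ext l
    fin_cases l <;>
      simp only [Fin.sum_univ_eight, Oct.coord_add, Oct.coord_smul, Oct.coord_e] <;> simp
  right_inv p := Oct.sum_coord_smul_e p

/-- The quadratic form `Q(v) = −‖v‖²` on ℝ⁸. -/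
def Q8 : QuadraticForm ℝ (EuclideanSpace ℝ (Fin 8)) :=
  - LinearMap.BilinMap.toQuadraticMap
      (innerₗ (EuclideanSpace ℝ (Fin 8)) : LinearMap.BilinForm ℝ (EuclideanSpace ℝ (Fin 8)))

/-- The Clifford algebra `Cl₈` of `Q(v) = −‖v‖²` on ℝ⁸. -/
abbrev Cl8 := CliffordAlgebra Q8

/-- The Clifford generators `g_l := ι(b_l)`. -/
def g (l : Fin 8) : Cl8 := CliffordAlgebra.ι Q8 (EuclideanSpace.single l 1)

/-- The extension `J_j ⊗ id` of `J_j` to `𝕆 ⊗ Cl₈`. -/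
def JT (j : Fin 8) : Oct ⊗[ℝ] Cl8 →ₗ[ℝ] Oct ⊗[ℝ] Cl8 :=
  TensorProduct.map (Oct.J j) LinearMap.id

/-- The element `Ω := Σᵢ conj(eᵢ) ⊗ gᵢ` of `𝕆 ⊗ Cl₈`. -/
def Omega : Oct ⊗[ℝ] Cl8 := ∑ i : Fin 8, (Oct.e i).conj ⊗ₜ[ℝ] g i

/-- The octonionic Witt basis `f_j := (J_j ⊗ id)(Ω)`. -/
def f (j : Fin 8) : Oct ⊗[ℝ] Cl8 := JT j Omega

/-- The twistor vectors `X_i := Φ⁻¹(Φ(X)·conj(e_i))`. -/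
def Xtw (X : EuclideanSpace ℝ (Fin 8)) (i : Fin 8) : EuclideanSpace ℝ (Fin 8) :=
  Phi.symm (Phi X * (Oct.e i).conj)

/-- The Hermitian variables `Z_j := (J_j ⊗ id)(Ω·(Φ(X) ⊗ 1))`. -/
def Z (X : EuclideanSpace ℝ (Fin 8)) (j : Fin 8) : Oct ⊗[ℝ] Cl8 :=
  JT j (Omega * (Phi X ⊗ₜ[ℝ] (1 : Cl8)))



namespace Oct

lemma bdot_lt (i j : Fin 8) : bdot i j < 2 := Nat.mod_lt _ (by norm_num)

lemma pow_sign (i j : Fin 8) : ((-1:ℝ))^(bdot i j) = if bdot i j = 0 then 1 else -1 := by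
  have h := bdot_lt i j
  interval_cases h2 : bdot i j <;> simp

lemma sum_sign (l : Fin 8) : ∑ i : Fin 8, ((-1:ℝ))^(bdot i l) = if l = 0 then 8 else 0 := by
  simp only [Fin.sum_univ_eight, pow_sign]
  fin_cases l <;> simp (config := { decide := true }) <;> norm_num

lemma J_apply (i : Fin 8) (p : Oct) :
    J i p = ∑ l : Fin 8, ((-1 : ℝ) ^ bdot i l * coord l p) • e l := rfl

lemma J_e (i m : Fin 8) : J i (e m) = ((-1:ℝ)^(bdot i m)) • e m := by
  rw [J_apply]
  have : ∀ l : Fin 8, ((-1 : ℝ) ^ bdot i l * coord l (e m)) • e l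
      = if l = m then ((-1:ℝ)^(bdot i m)) • e m else 0 := by
    intro l
    rw [coord_e]
    split <;> simp_all
  simp only [this, Finset.sum_ite_eq', Finset.mem_univ, if_pos]

lemma one_eq_e0 : (1 : Oct) = e 0 := rfl

lemma sumJ (p : Oct) : ∑ i : Fin 8, J i p = (8 * p.x.re) • (1 : Oct) := by
  simp only [J_apply]
  rw [Finset.sum_comm]
  have : ∀ l : Fin 8, (∑ i : Fin 8, ((-1 : ℝ) ^ bdot i l * coord l p) • e l)
      = ((∑ i : Fin 8, (-1 : ℝ) ^ bdot i l) * coord l p) • e l := by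
    intro l
    rw [Finset.sum_mul, ← Finset.sum_smul]
  simp only [this, sum_sign]
  rw [Fin.sum_univ_eight]
  simp (config := { decide := true }) [one_eq_e0]

end Oct
namespace Oct

@[simp] lemma x_neg (p : Oct) : (-p).x = -p.x := rfl
@[simp] lemma y_neg (p : Oct) : (-p).y = -p.y := rfl

set_option maxHeartbeats 2000000 in
lemma emul (l m : Fin 8) : ∃ (s : ℝ) (n : Fin 8), (s = 1 ∨ s = -1) ∧
    (∀ i : Fin 8, (bdot i l + bdot i m) % 2 = bdot i n % 2) ∧ e l * e m = s • e n := by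
  fin_cases l <;> fin_cases m
  · exact ⟨1, 0, Or.inl rfl, by decide, by
      refine Oct.ext ?_ ?_ <;> ext <;>
        simp [Quaternion.ext_iff, Quaternion.re_mul, Quaternion.imI_mul,
          Quaternion.imJ_mul, Quaternion.imK_mul] <;> simp [mk, x, y]⟩
  · exact ⟨1, 1, Or.inl rfl, by decide, by
      refine Oct.ext ?_ ?_ <;> ext <;>
        simp [Quaternion.ext_iff, Quaternion.re_mul, Quaternion.imI_mul,
          Quaternion.imJ_mul, Quaternion.imK_mul] <;> simp [mk, x, y]⟩
  · exact ⟨1, 2, Or.inl rfl, by decide, by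
      refine Oct.ext ?_ ?_ <;> ext <;>
        simp [Quaternion.ext_iff, Quaternion.re_mul, Quaternion.imI_mul,
          Quaternion.imJ_mul, Quaternion.imK_mul] <;> simp [mk, x, y]⟩
  · exact ⟨1, 3, Or.inl rfl, by decide, by
      refine Oct.ext ?_ ?_ <;> ext <;>
        simp [Quaternion.ext_iff, Quaternion.re_mul, Quaternion.imI_mul,
          Quaternion.imJ_mul, Quaternion.imK_mul] <;> simp [mk, x, y]⟩
  · exact ⟨1, 4, Or.inl rfl, by decide, by
      refine Oct.ext ?_ ?_ <;> ext <;>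
        simp [Quaternion.ext_iff, Quaternion.re_mul, Quaternion.imI_mul,
          Quaternion.imJ_mul, Quaternion.imK_mul] <;> simp [mk, x, y]⟩
  · exact ⟨1, 5, Or.inl rfl, by decide, by
      refine Oct.ext ?_ ?_ <;> ext <;>
        simp [Quaternion.ext_iff, Quaternion.re_mul, Quaternion.imI_mul,
          Quaternion.imJ_mul, Quaternion.imK_mul] <;> simp [mk, x, y]⟩
  · exact ⟨1, 6, Or.inl rfl, by decide, by
      refine Oct.ext ?_ ?_ <;> ext <;>
        simp [Quaternion.ext_iff, Quaternion.re_mul, Quaternion.imI_mul,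
          Quaternion.imJ_mul, Quaternion.imK_mul] <;> simp [mk, x, y]⟩
  · exact ⟨1, 7, Or.inl rfl, by decide, by
      refine Oct.ext ?_ ?_ <;> ext <;>
        simp [Quaternion.ext_iff, Quaternion.re_mul, Quaternion.imI_mul,
          Quaternion.imJ_mul, Quaternion.imK_mul] <;> simp [mk, x, y]⟩
  · exact ⟨1, 1, Or.inl rfl, by decide, by
      refine Oct.ext ?_ ?_ <;> ext <;>
        simp [Quaternion.ext_iff, Quaternion.re_mul, Quaternion.imI_mul,
          Quaternion.imJ_mul, Quaternion.imK_mul] <;> simp [mk, x, y]⟩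
  · exact ⟨-1, 0, Or.inr rfl, by decide, by
      refine Oct.ext ?_ ?_ <;> ext <;>
        simp [Quaternion.ext_iff, Quaternion.re_mul, Quaternion.imI_mul,
          Quaternion.imJ_mul, Quaternion.imK_mul] <;> simp [mk, x, y]⟩
  · exact ⟨1, 3, Or.inl rfl, by decide, by
      refine Oct.ext ?_ ?_ <;> ext <;>
        simp [Quaternion.ext_iff, Quaternion.re_mul, Quaternion.imI_mul,
          Quaternion.imJ_mul, Quaternion.imK_mul] <;> simp [mk, x, y]⟩
  · exact ⟨-1, 2, Or.inr rfl, by decide, by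
      refine Oct.ext ?_ ?_ <;> ext <;>
        simp [Quaternion.ext_iff, Quaternion.re_mul, Quaternion.imI_mul,
          Quaternion.imJ_mul, Quaternion.imK_mul] <;> simp [mk, x, y]⟩
  · exact ⟨1, 5, Or.inl rfl, by decide, by
      refine Oct.ext ?_ ?_ <;> ext <;>
        simp [Quaternion.ext_iff, Quaternion.re_mul, Quaternion.imI_mul,
          Quaternion.imJ_mul, Quaternion.imK_mul] <;> simp [mk, x, y]⟩
  · exact ⟨-1, 4, Or.inr rfl, by decide, by
      refine Oct.ext ?_ ?_ <;> ext <;>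
        simp [Quaternion.ext_iff, Quaternion.re_mul, Quaternion.imI_mul,
          Quaternion.imJ_mul, Quaternion.imK_mul] <;> simp [mk, x, y]⟩
  · exact ⟨-1, 7, Or.inr rfl, by decide, by
      refine Oct.ext ?_ ?_ <;> ext <;>
        simp [Quaternion.ext_iff, Quaternion.re_mul, Quaternion.imI_mul,
          Quaternion.imJ_mul, Quaternion.imK_mul] <;> simp [mk, x, y]⟩
  · exact ⟨1, 6, Or.inl rfl, by decide, by
      refine Oct.ext ?_ ?_ <;> ext <;>
        simp [Quaternion.ext_iff, Quaternion.re_mul, Quaternion.imI_mul,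
          Quaternion.imJ_mul, Quaternion.imK_mul] <;> simp [mk, x, y]⟩
  · exact ⟨1, 2, Or.inl rfl, by decide, by
      refine Oct.ext ?_ ?_ <;> ext <;>
        simp [Quaternion.ext_iff, Quaternion.re_mul, Quaternion.imI_mul,
          Quaternion.imJ_mul, Quaternion.imK_mul] <;> simp [mk, x, y]⟩
  · exact ⟨-1, 3, Or.inr rfl, by decide, by
      refine Oct.ext ?_ ?_ <;> ext <;>
        simp [Quaternion.ext_iff, Quaternion.re_mul, Quaternion.imI_mul,
          Quaternion.imJ_mul, Quaternion.imK_mul] <;> simp [mk, x, y]⟩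
  · exact ⟨-1, 0, Or.inr rfl, by decide, by
      refine Oct.ext ?_ ?_ <;> ext <;>
        simp [Quaternion.ext_iff, Quaternion.re_mul, Quaternion.imI_mul,
          Quaternion.imJ_mul, Quaternion.imK_mul] <;> simp [mk, x, y]⟩
  · exact ⟨1, 1, Or.inl rfl, by decide, by
      refine Oct.ext ?_ ?_ <;> ext <;>
        simp [Quaternion.ext_iff, Quaternion.re_mul, Quaternion.imI_mul,
          Quaternion.imJ_mul, Quaternion.imK_mul] <;> simp [mk, x, y]⟩
  · exact ⟨1, 6, Or.inl rfl, by decide, by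
      refine Oct.ext ?_ ?_ <;> ext <;>
        simp [Quaternion.ext_iff, Quaternion.re_mul, Quaternion.imI_mul,
          Quaternion.imJ_mul, Quaternion.imK_mul] <;> simp [mk, x, y]⟩
  · exact ⟨1, 7, Or.inl rfl, by decide, by
      refine Oct.ext ?_ ?_ <;> ext <;>
        simp [Quaternion.ext_iff, Quaternion.re_mul, Quaternion.imI_mul,
          Quaternion.imJ_mul, Quaternion.imK_mul] <;> simp [mk, x, y]⟩
  · exact ⟨-1, 4, Or.inr rfl, by decide, by
      refine Oct.ext ?_ ?_ <;> ext <;>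
        simp [Quaternion.ext_iff, Quaternion.re_mul, Quaternion.imI_mul,
          Quaternion.imJ_mul, Quaternion.imK_mul] <;> simp [mk, x, y]⟩
  · exact ⟨-1, 5, Or.inr rfl, by decide, by
      refine Oct.ext ?_ ?_ <;> ext <;>
        simp [Quaternion.ext_iff, Quaternion.re_mul, Quaternion.imI_mul,
          Quaternion.imJ_mul, Quaternion.imK_mul] <;> simp [mk, x, y]⟩
  · exact ⟨1, 3, Or.inl rfl, by decide, by
      refine Oct.ext ?_ ?_ <;> ext <;>
        simp [Quaternion.ext_iff, Quaternion.re_mul, Quaternion.imI_mul,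
          Quaternion.imJ_mul, Quaternion.imK_mul] <;> simp [mk, x, y]⟩
  · exact ⟨1, 2, Or.inl rfl, by decide, by
      refine Oct.ext ?_ ?_ <;> ext <;>
        simp [Quaternion.ext_iff, Quaternion.re_mul, Quaternion.imI_mul,
          Quaternion.imJ_mul, Quaternion.imK_mul] <;> simp [mk, x, y]⟩
  · exact ⟨-1, 1, Or.inr rfl, by decide, by
      refine Oct.ext ?_ ?_ <;> ext <;>
        simp [Quaternion.ext_iff, Quaternion.re_mul, Quaternion.imI_mul,
          Quaternion.imJ_mul, Quaternion.imK_mul] <;> simp [mk, x, y]⟩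
  · exact ⟨-1, 0, Or.inr rfl, by decide, by
      refine Oct.ext ?_ ?_ <;> ext <;>
        simp [Quaternion.ext_iff, Quaternion.re_mul, Quaternion.imI_mul,
          Quaternion.imJ_mul, Quaternion.imK_mul] <;> simp [mk, x, y]⟩
  · exact ⟨1, 7, Or.inl rfl, by decide, by
      refine Oct.ext ?_ ?_ <;> ext <;>
        simp [Quaternion.ext_iff, Quaternion.re_mul, Quaternion.imI_mul,
          Quaternion.imJ_mul, Quaternion.imK_mul] <;> simp [mk, x, y]⟩
  · exact ⟨-1, 6, Or.inr rfl, by decide, by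
      refine Oct.ext ?_ ?_ <;> ext <;>
        simp [Quaternion.ext_iff, Quaternion.re_mul, Quaternion.imI_mul,
          Quaternion.imJ_mul, Quaternion.imK_mul] <;> simp [mk, x, y]⟩
  · exact ⟨1, 5, Or.inl rfl, by decide, by
      refine Oct.ext ?_ ?_ <;> ext <;>
        simp [Quaternion.ext_iff, Quaternion.re_mul, Quaternion.imI_mul,
          Quaternion.imJ_mul, Quaternion.imK_mul] <;> simp [mk, x, y]⟩
  · exact ⟨-1, 4, Or.inr rfl, by decide, by
      refine Oct.ext ?_ ?_ <;> ext <;>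
        simp [Quaternion.ext_iff, Quaternion.re_mul, Quaternion.imI_mul,
          Quaternion.imJ_mul, Quaternion.imK_mul] <;> simp [mk, x, y]⟩
  · exact ⟨1, 4, Or.inl rfl, by decide, by
      refine Oct.ext ?_ ?_ <;> ext <;>
        simp [Quaternion.ext_iff, Quaternion.re_mul, Quaternion.imI_mul,
          Quaternion.imJ_mul, Quaternion.imK_mul] <;> simp [mk, x, y]⟩
  · exact ⟨-1, 5, Or.inr rfl, by decide, by
      refine Oct.ext ?_ ?_ <;> ext <;>
        simp [Quaternion.ext_iff, Quaternion.re_mul, Quaternion.imI_mul,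
          Quaternion.imJ_mul, Quaternion.imK_mul] <;> simp [mk, x, y]⟩
  · exact ⟨-1, 6, Or.inr rfl, by decide, by
      refine Oct.ext ?_ ?_ <;> ext <;>
        simp [Quaternion.ext_iff, Quaternion.re_mul, Quaternion.imI_mul,
          Quaternion.imJ_mul, Quaternion.imK_mul] <;> simp [mk, x, y]⟩
  · exact ⟨-1, 7, Or.inr rfl, by decide, by
      refine Oct.ext ?_ ?_ <;> ext <;>
        simp [Quaternion.ext_iff, Quaternion.re_mul, Quaternion.imI_mul,
          Quaternion.imJ_mul, Quaternion.imK_mul] <;> simp [mk, x, y]⟩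
  · exact ⟨-1, 0, Or.inr rfl, by decide, by
      refine Oct.ext ?_ ?_ <;> ext <;>
        simp [Quaternion.ext_iff, Quaternion.re_mul, Quaternion.imI_mul,
          Quaternion.imJ_mul, Quaternion.imK_mul] <;> simp [mk, x, y]⟩
  · exact ⟨1, 1, Or.inl rfl, by decide, by
      refine Oct.ext ?_ ?_ <;> ext <;>
        simp [Quaternion.ext_iff, Quaternion.re_mul, Quaternion.imI_mul,
          Quaternion.imJ_mul, Quaternion.imK_mul] <;> simp [mk, x, y]⟩
  · exact ⟨1, 2, Or.inl rfl, by decide, by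
      refine Oct.ext ?_ ?_ <;> ext <;>
        simp [Quaternion.ext_iff, Quaternion.re_mul, Quaternion.imI_mul,
          Quaternion.imJ_mul, Quaternion.imK_mul] <;> simp [mk, x, y]⟩
  · exact ⟨1, 3, Or.inl rfl, by decide, by
      refine Oct.ext ?_ ?_ <;> ext <;>
        simp [Quaternion.ext_iff, Quaternion.re_mul, Quaternion.imI_mul,
          Quaternion.imJ_mul, Quaternion.imK_mul] <;> simp [mk, x, y]⟩
  · exact ⟨1, 5, Or.inl rfl, by decide, by
      refine Oct.ext ?_ ?_ <;> ext <;>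
        simp [Quaternion.ext_iff, Quaternion.re_mul, Quaternion.imI_mul,
          Quaternion.imJ_mul, Quaternion.imK_mul] <;> simp [mk, x, y]⟩
  · exact ⟨1, 4, Or.inl rfl, by decide, by
      refine Oct.ext ?_ ?_ <;> ext <;>
        simp [Quaternion.ext_iff, Quaternion.re_mul, Quaternion.imI_mul,
          Quaternion.imJ_mul, Quaternion.imK_mul] <;> simp [mk, x, y]⟩
  · exact ⟨-1, 7, Or.inr rfl, by decide, by
      refine Oct.ext ?_ ?_ <;> ext <;>
        simp [Quaternion.ext_iff, Quaternion.re_mul, Quaternion.imI_mul,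
          Quaternion.imJ_mul, Quaternion.imK_mul] <;> simp [mk, x, y]⟩
  · exact ⟨1, 6, Or.inl rfl, by decide, by
      refine Oct.ext ?_ ?_ <;> ext <;>
        simp [Quaternion.ext_iff, Quaternion.re_mul, Quaternion.imI_mul,
          Quaternion.imJ_mul, Quaternion.imK_mul] <;> simp [mk, x, y]⟩
  · exact ⟨-1, 1, Or.inr rfl, by decide, by
      refine Oct.ext ?_ ?_ <;> ext <;>
        simp [Quaternion.ext_iff, Quaternion.re_mul, Quaternion.imI_mul,
          Quaternion.imJ_mul, Quaternion.imK_mul] <;> simp [mk, x, y]⟩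
  · exact ⟨-1, 0, Or.inr rfl, by decide, by
      refine Oct.ext ?_ ?_ <;> ext <;>
        simp [Quaternion.ext_iff, Quaternion.re_mul, Quaternion.imI_mul,
          Quaternion.imJ_mul, Quaternion.imK_mul] <;> simp [mk, x, y]⟩
  · exact ⟨-1, 3, Or.inr rfl, by decide, by
      refine Oct.ext ?_ ?_ <;> ext <;>
        simp [Quaternion.ext_iff, Quaternion.re_mul, Quaternion.imI_mul,
          Quaternion.imJ_mul, Quaternion.imK_mul] <;> simp [mk, x, y]⟩
  · exact ⟨1, 2, Or.inl rfl, by decide, by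
      refine Oct.ext ?_ ?_ <;> ext <;>
        simp [Quaternion.ext_iff, Quaternion.re_mul, Quaternion.imI_mul,
          Quaternion.imJ_mul, Quaternion.imK_mul] <;> simp [mk, x, y]⟩
  · exact ⟨1, 6, Or.inl rfl, by decide, by
      refine Oct.ext ?_ ?_ <;> ext <;>
        simp [Quaternion.ext_iff, Quaternion.re_mul, Quaternion.imI_mul,
          Quaternion.imJ_mul, Quaternion.imK_mul] <;> simp [mk, x, y]⟩
  · exact ⟨1, 7, Or.inl rfl, by decide, by
      refine Oct.ext ?_ ?_ <;> ext <;>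
        simp [Quaternion.ext_iff, Quaternion.re_mul, Quaternion.imI_mul,
          Quaternion.imJ_mul, Quaternion.imK_mul] <;> simp [mk, x, y]⟩
  · exact ⟨1, 4, Or.inl rfl, by decide, by
      refine Oct.ext ?_ ?_ <;> ext <;>
        simp [Quaternion.ext_iff, Quaternion.re_mul, Quaternion.imI_mul,
          Quaternion.imJ_mul, Quaternion.imK_mul] <;> simp [mk, x, y]⟩
  · exact ⟨-1, 5, Or.inr rfl, by decide, by
      refine Oct.ext ?_ ?_ <;> ext <;>
        simp [Quaternion.ext_iff, Quaternion.re_mul, Quaternion.imI_mul,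
          Quaternion.imJ_mul, Quaternion.imK_mul] <;> simp [mk, x, y]⟩
  · exact ⟨-1, 2, Or.inr rfl, by decide, by
      refine Oct.ext ?_ ?_ <;> ext <;>
        simp [Quaternion.ext_iff, Quaternion.re_mul, Quaternion.imI_mul,
          Quaternion.imJ_mul, Quaternion.imK_mul] <;> simp [mk, x, y]⟩
  · exact ⟨1, 3, Or.inl rfl, by decide, by
      refine Oct.ext ?_ ?_ <;> ext <;>
        simp [Quaternion.ext_iff, Quaternion.re_mul, Quaternion.imI_mul,
          Quaternion.imJ_mul, Quaternion.imK_mul] <;> simp [mk, x, y]⟩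
  · exact ⟨-1, 0, Or.inr rfl, by decide, by
      refine Oct.ext ?_ ?_ <;> ext <;>
        simp [Quaternion.ext_iff, Quaternion.re_mul, Quaternion.imI_mul,
          Quaternion.imJ_mul, Quaternion.imK_mul] <;> simp [mk, x, y]⟩
  · exact ⟨-1, 1, Or.inr rfl, by decide, by
      refine Oct.ext ?_ ?_ <;> ext <;>
        simp [Quaternion.ext_iff, Quaternion.re_mul, Quaternion.imI_mul,
          Quaternion.imJ_mul, Quaternion.imK_mul] <;> simp [mk, x, y]⟩
  · exact ⟨1, 7, Or.inl rfl, by decide, by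
      refine Oct.ext ?_ ?_ <;> ext <;>
        simp [Quaternion.ext_iff, Quaternion.re_mul, Quaternion.imI_mul,
          Quaternion.imJ_mul, Quaternion.imK_mul] <;> simp [mk, x, y]⟩
  · exact ⟨-1, 6, Or.inr rfl, by decide, by
      refine Oct.ext ?_ ?_ <;> ext <;>
        simp [Quaternion.ext_iff, Quaternion.re_mul, Quaternion.imI_mul,
          Quaternion.imJ_mul, Quaternion.imK_mul] <;> simp [mk, x, y]⟩
  · exact ⟨1, 5, Or.inl rfl, by decide, by
      refine Oct.ext ?_ ?_ <;> ext <;>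
        simp [Quaternion.ext_iff, Quaternion.re_mul, Quaternion.imI_mul,
          Quaternion.imJ_mul, Quaternion.imK_mul] <;> simp [mk, x, y]⟩
  · exact ⟨1, 4, Or.inl rfl, by decide, by
      refine Oct.ext ?_ ?_ <;> ext <;>
        simp [Quaternion.ext_iff, Quaternion.re_mul, Quaternion.imI_mul,
          Quaternion.imJ_mul, Quaternion.imK_mul] <;> simp [mk, x, y]⟩
  · exact ⟨-1, 3, Or.inr rfl, by decide, by
      refine Oct.ext ?_ ?_ <;> ext <;>
        simp [Quaternion.ext_iff, Quaternion.re_mul, Quaternion.imI_mul,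
          Quaternion.imJ_mul, Quaternion.imK_mul] <;> simp [mk, x, y]⟩
  · exact ⟨-1, 2, Or.inr rfl, by decide, by
      refine Oct.ext ?_ ?_ <;> ext <;>
        simp [Quaternion.ext_iff, Quaternion.re_mul, Quaternion.imI_mul,
          Quaternion.imJ_mul, Quaternion.imK_mul] <;> simp [mk, x, y]⟩
  · exact ⟨1, 1, Or.inl rfl, by decide, by
      refine Oct.ext ?_ ?_ <;> ext <;>
        simp [Quaternion.ext_iff, Quaternion.re_mul, Quaternion.imI_mul,
          Quaternion.imJ_mul, Quaternion.imK_mul] <;> simp [mk, x, y]⟩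
  · exact ⟨-1, 0, Or.inr rfl, by decide, by
      refine Oct.ext ?_ ?_ <;> ext <;>
        simp [Quaternion.ext_iff, Quaternion.re_mul, Quaternion.imI_mul,
          Quaternion.imJ_mul, Quaternion.imK_mul] <;> simp [mk, x, y]⟩

end Oct
namespace Oct

lemma sign_of_parity {a b c : ℕ} (h : (a + b) % 2 = c % 2) :
    ((-1:ℝ))^c = (-1)^a * (-1)^b := by
  rw [← pow_add]
  conv_lhs => rw [neg_one_pow_eq_pow_mod_two, ← h, ← neg_one_pow_eq_pow_mod_two]

lemma J_mul_e (i l m : Fin 8) : J i (e l * e m) = J i (e l) * J i (e m) := by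
  obtain ⟨s, n, _, hpar, hs⟩ := emul l m
  rw [J_e, J_e, smul_mul_assoc, mul_smul_comm, hs, map_smul, J_e]
  rw [smul_smul, smul_smul, smul_smul]
  congr 1
  rw [sign_of_parity (hpar i)]; ring

lemma J_mul (i : Fin 8) (p q : Oct) : J i (p * q) = J i p * J i q := by
  conv_lhs => rw [← sum_coord_smul_e p, ← sum_coord_smul_e q]
  conv_rhs => rw [← sum_coord_smul_e p, ← sum_coord_smul_e q]
  rw [Finset.sum_mul_sum, map_sum]
  simp only [map_sum, smul_mul_assoc, mul_smul_comm, map_smul, J_mul_e, Finset.sum_mul_sum]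

set_option maxHeartbeats 2000000 in
lemma re_conj_mul_e (l m : Fin 8) : ((e l).conj * e m).x.re = if l = m then 1 else 0 := by
  fin_cases l <;> fin_cases m <;>
    simp (config := { decide := true }) [conj, Quaternion.re_mul] <;> simp [mk, x, y]

lemma re_conj_mul (l : Fin 8) (p : Oct) : ((e l).conj * p).x.re = coord l p := by
  conv_lhs => rw [← sum_coord_smul_e p]
  rw [Finset.mul_sum]
  have hx : ∀ q r : Oct, (q + r).x.re = q.x.re + r.x.re := by intro q r; rfl
  have hs : ∀ (c : ℝ) (q : Oct), (c • q).x.re = c * q.x.re := by intro c q; rfl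
  have : (∑ m : Fin 8, (e l).conj * (coord m p • e m)).x.re
      = ∑ m : Fin 8, coord m p * ((e l).conj * e m).x.re := by
    rw [Fin.sum_univ_eight, Fin.sum_univ_eight]
    simp only [hx, mul_smul_comm, hs]
  rw [this]
  simp only [re_conj_mul_e]
  rw [Fin.sum_univ_eight]
  fin_cases l <;> simp (config := { decide := true })

end Oct
lemma JT_tmul (i : Fin 8) (p : Oct) (c : Cl8) : JT i (p ⊗ₜ[ℝ] c) = (Oct.J i p) ⊗ₜ[ℝ] c := by
  simp [JT]

lemma omega_mul (p : Oct) :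
    Omega * (p ⊗ₜ[ℝ] (1 : Cl8)) = ∑ l : Fin 8, ((Oct.e l).conj * p) ⊗ₜ[ℝ] g l := by
  rw [Omega, Finset.sum_mul]
  simp only [Algebra.TensorProduct.tmul_mul_tmul, mul_one]

lemma Z_eq (X : EuclideanSpace ℝ (Fin 8)) (i : Fin 8) :
    Z X i = ∑ l : Fin 8, (Oct.J i ((Oct.e l).conj * Phi X)) ⊗ₜ[ℝ] g l := by
  rw [Z, omega_mul, map_sum]
  simp only [JT_tmul]

lemma f_eq (i : Fin 8) : f i = ∑ l : Fin 8, (Oct.J i (Oct.e l).conj) ⊗ₜ[ℝ] g l := by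
  rw [f, Omega, map_sum]
  simp only [JT_tmul]

lemma coord_Phi (X : EuclideanSpace ℝ (Fin 8)) (l : Fin 8) : Oct.coord l (Phi X) = X l := by
  have h := Phi.symm_apply_apply X
  exact congrFun (congrArg (fun v => WithLp.ofLp v) h) l

lemma X_decomp (X : EuclideanSpace ℝ (Fin 8)) :
    X = ∑ l : Fin 8, X l • EuclideanSpace.single l (1:ℝ) := by
  ext j
  rw [Fin.sum_univ_eight]
  fin_cases j <;>
    simp [EuclideanSpace.single_apply]

lemma lhs_eq (X : EuclideanSpace ℝ (Fin 8)) :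
    (1 : Oct) ⊗ₜ[ℝ] CliffordAlgebra.ι Q8 X = ∑ l : Fin 8, X l • ((1:Oct) ⊗ₜ[ℝ] g l) := by
  conv_lhs => rw [X_decomp X]
  rw [map_sum]
  simp only [map_smul, g, TensorProduct.tmul_sum, TensorProduct.tmul_smul]

lemma sum_Z (X : EuclideanSpace ℝ (Fin 8)) :
    ∑ i : Fin 8, Z X i = (8:ℝ) • ∑ l : Fin 8, X l • ((1:Oct) ⊗ₜ[ℝ] g l) := by
  simp only [Z_eq]
  rw [Finset.sum_comm]
  have h : ∀ l : Fin 8, ∑ i : Fin 8, (Oct.J i ((Oct.e l).conj * Phi X)) ⊗ₜ[ℝ] g l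
      = (8 * X l) • ((1:Oct) ⊗ₜ[ℝ] g l) := by
    intro l
    rw [← TensorProduct.sum_tmul, Oct.sumJ, Oct.re_conj_mul, coord_Phi,
      TensorProduct.smul_tmul']
  simp only [h]
  rw [Finset.smul_sum]
  exact Finset.sum_congr rfl fun l _ => by rw [smul_smul]

lemma fJ_eq_Z (X : EuclideanSpace ℝ (Fin 8)) (i : Fin 8) :
    f i * (Oct.J i (Phi X) ⊗ₜ[ℝ] (1 : Cl8)) = Z X i := by
  rw [f_eq, Z_eq, Finset.sum_mul]
  refine Finset.sum_congr rfl fun l _ => ?_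
  rw [Algebra.TensorProduct.tmul_mul_tmul, mul_one, ← Oct.J_mul]
/-- Witt decomposition of a real vector:
`1 ⊗ ι(X) = (1/8)·Σᵢ Zᵢ`, and equivalently `1 ⊗ ι(X) = (1/8)·Σᵢ fᵢ·(Jᵢ(Φ(X)) ⊗ 1)`. -/
theorem witt_decomposition (X : EuclideanSpace ℝ (Fin 8)) :
    (1 : Oct) ⊗ₜ[ℝ] CliffordAlgebra.ι Q8 X = (8 : ℝ)⁻¹ • ∑ i : Fin 8, Z X i ∧
    (1 : Oct) ⊗ₜ[ℝ] CliffordAlgebra.ι Q8 X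
      = (8 : ℝ)⁻¹ • ∑ i : Fin 8, f i * (Oct.J i (Phi X) ⊗ₜ[ℝ] (1 : Cl8)) := by
  have h1 : (1 : Oct) ⊗ₜ[ℝ] CliffordAlgebra.ι Q8 X = (8 : ℝ)⁻¹ • ∑ i : Fin 8, Z X i := by
    rw [sum_Z, smul_smul]
    norm_num [lhs_eq]
  exact ⟨h1, by simp only [fJ_eq_Z]; exact h1⟩
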